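/- (Misspecification bound.) Consider a finite-horizon MDP with ε-approximate low-rank structure and the regression data setup. Fix a policy π and suppose sup_s |V̄(s)| ≤ 2H and sup_s |V̄(s) − V^π_{t+1}(s)| ≤ 3H. Then for all (s,a) ∈ S × A: |m^π(s,a)| ≤ 4·ε·H·(√(d·k)·‖φ_t(s,a)‖_{Σ⁻¹} + 1), where ‖x‖_{Σ⁻¹} := √(xᵀ Σ⁻¹ x). -/

import Mathlib

open MeasureTheory Matrix Finset

lemma aux_dotProduct_sum {ι n : Type*} [Fintype n] (s : Finset ι) (v : n → ℝ) (w : ι → n → ℝ) :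
    v ⬝ᵥ (∑ i ∈ s, w i) = ∑ i ∈ s, v ⬝ᵥ w i := by
  simp [dotProduct, Finset.mul_sum]
  rw [Finset.sum_comm]

lemma aux_sum_mulVec {ι n : Type*} [Fintype n] (s : Finset ι) (M : ι → Matrix n n ℝ) (x : n → ℝ) :
    (∑ i ∈ s, M i) *ᵥ x = ∑ i ∈ s, M i *ᵥ x := by
  ext j
  simp [Matrix.mulVec, dotProduct, Matrix.sum_apply, Finset.sum_mul]
  rw [Finset.sum_comm]

lemma aux_vecMulVec_mulVec {n : Type*} [Fintype n] (v w x : n → ℝ) :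
    Matrix.vecMulVec v w *ᵥ x = (w ⬝ᵥ x) • v := by
  ext i
  simp [Matrix.mulVec, dotProduct, Matrix.vecMulVec_apply, Finset.mul_sum,
    Finset.sum_mul, mul_assoc, mul_comm, mul_left_comm]

lemma aux_posDef {d k : ℕ} (lam : ℝ) (hlam : 0 < lam) (φD : Fin k → (Fin d → ℝ)) :
    (lam • (1 : Matrix (Fin d) (Fin d) ℝ) + ∑ i, Matrix.vecMulVec (φD i) (φD i)).PosDef := by
  apply Matrix.PosDef.add_posSemidef
  · rw [Matrix.smul_one_eq_diagonal]
    exact Matrix.posDef_diagonal_iff.mpr fun _ => hlam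
  · refine Matrix.posSemidef_iff_dotProduct_mulVec.mpr ⟨?_, ?_⟩
    · ext i j
      simp [Matrix.conjTranspose_apply, Matrix.sum_apply, Matrix.vecMulVec_apply, mul_comm]
    · intro x
      rw [star_trivial, aux_sum_mulVec, aux_dotProduct_sum]
      refine Finset.sum_nonneg fun i _ => ?_
      rw [aux_vecMulVec_mulVec, dotProduct_smul]
      have : φD i ⬝ᵥ x = x ⬝ᵥ φD i := dotProduct_comm _ _
      rw [smul_eq_mul, this, ← sq]
      positivity

set_option maxHeartbeats 1000000 in
/-- Misspecification bound.
In a finite-horizon MDP with `ε`-approximate low-rank structure and the regression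
data setup, if `sup_s |V̄(s)| ≤ 2H` and `sup_s |V̄(s) − V^π_{t+1}(s)| ≤ 3H`, then
for all `(s,a)`: `|m^π(s,a)| ≤ 4 ε H (√(d k) ‖φ_t(s,a)‖_{Σ⁻¹} + 1)`. -/
theorem misspecification_bound
    {S : Type*} [MeasurableSpace S] {A : Type*} [Nonempty A]
    (H d : ℕ) (hH : 1 ≤ H)
    -- features, rewards, transitions
    (φ : ℕ → S → A → (Fin d → ℝ))
    (r : ℕ → S → A → ℝ) (hr01 : ∀ t s a, r t s a ∈ Set.Icc (0 : ℝ) 1)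
    (P : ℕ → S → A → Measure S)
    (hP_prob : ∀ t s a, IsProbabilityMeasure (P t s a))
    -- a policy and its value functions, defined by backward recursion
    (π : ℕ → S → A)
    (Q : ℕ → S → A → ℝ) (V : ℕ → S → ℝ)
    (hV_meas : ∀ u, Measurable (V u))
    (hV_top : ∀ s, V (H + 1) s = 0)
    (hQ : ∀ u, 1 ≤ u → u ≤ H → ∀ s a,
      Q u s a = r u s a + ∫ s', V (u + 1) s' ∂(P u s a))
    (hV_int : ∀ u, 1 ≤ u → u ≤ H → ∀ s a, Integrable (V (u + 1)) (P u s a))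
    (hV : ∀ u, 1 ≤ u → u ≤ H → ∀ s, V u s = Q u s (π u s))
    -- ε-approximate low-rank structure
    (ε : ℝ) (hε : 0 ≤ ε) (Lψ : ℝ)
    (μ : ℕ → Measure S) (hμ : ∀ u, SigmaFinite (μ u))
    (ψ : ℕ → S → (Fin d → ℝ))
    (hψ_int : ∀ u, Integrable (ψ u) (μ u))
    (hψ_L : ∀ u, 1 ≤ u → u ≤ H → ∫ s', Real.sqrt (ψ u s' ⬝ᵥ ψ u s') ∂(μ u) ≤ Lψ)
    (θr : ℕ → (Fin d → ℝ))
    (hr_approx : ∀ u, 1 ≤ u → u ≤ H → ∀ s a, |r u s a - φ u s a ⬝ᵥ θr u| ≤ ε)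
    (p : ℕ → S → A → S → ℝ)
    (hp_nonneg : ∀ u s a s', 0 ≤ p u s a s')
    (hp_meas : ∀ u s a, Measurable (p u s a))
    (hP_dens : ∀ u, 1 ≤ u → u ≤ H → ∀ s a,
      P u s a = (μ u).withDensity fun s' => ENNReal.ofReal (p u s a s'))
    (hΔP_int : ∀ u, 1 ≤ u → u ≤ H → ∀ s a,
      Integrable (fun s' => |p u s a s' - φ u s a ⬝ᵥ ψ u s'|) (μ u))
    (hΔP_eps : ∀ u, 1 ≤ u → u ≤ H → ∀ s a,
      ∫ s', |p u s a s' - φ u s a ⬝ᵥ ψ u s'| ∂(μ u) ≤ ε)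
    -- regression data setup at a fixed timestep t and episode k
    (t : ℕ) (ht1 : 1 ≤ t) (htH : t ≤ H)
    (k : ℕ) (hk : 1 ≤ k)
    (lam : ℝ) (hlam : 0 < lam)
    (sD : Fin (k - 1) → S) (aD : Fin (k - 1) → A) (s'D : Fin (k - 1) → S)
    (φD : Fin (k - 1) → (Fin d → ℝ)) (hφD : ∀ i, φD i = φ t (sD i) (aD i))
    (Sig : Matrix (Fin d) (Fin d) ℝ)
    (hSig : Sig = lam • (1 : Matrix (Fin d) (Fin d) ℝ) +
      ∑ i, Matrix.vecMulVec (φD i) (φD i))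
    -- a bounded measurable next-state value function used in the regression
    (Vb : S → ℝ) (hVb_meas : Measurable Vb) (hVb_bdd : ∃ C, ∀ s, |Vb s| ≤ C)
    (hVb_int : ∀ s a, Integrable Vb (P t s a))
    -- θ^π_t and the misspecification term m^π
    (θπ : Fin d → ℝ)
    (hθπ : θπ = θr t + ∫ s', V (t + 1) s' • ψ t s' ∂(μ t))
    (hθπ_int : Integrable (fun s' => V (t + 1) s' • ψ t s') (μ t))
    (m : S → A → ℝ)
    (hm : ∀ s a, m s a =
      φ t s a ⬝ᵥ (Sig⁻¹ *ᵥ ∑ i,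
        ((r t (sD i) (aD i) - φD i ⬝ᵥ θr t) +
          ∫ s', (p t (sD i) (aD i) s' - φD i ⬝ᵥ ψ t s') * Vb s' ∂(μ t)) • φD i)
      + (Q t s a - φ t s a ⬝ᵥ θπ)
      - ∫ s', (p t s a s' - φ t s a ⬝ᵥ ψ t s') * (Vb s' - V (t + 1) s') ∂(μ t))
    -- boundedness of the regression value function
    (hVb_2H : ∀ s, |Vb s| ≤ 2 * H)
    (hVbV_3H : ∀ s, |Vb s - V (t + 1) s| ≤ 3 * H) :
    ∀ s a,
      |m s a| ≤ 4 * ε * H *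
        (Real.sqrt ((d : ℝ) * k) * Real.sqrt (φ t s a ⬝ᵥ (Sig⁻¹ *ᵥ φ t s a)) + 1) := by
  -- general bound on integrals against the transition misspecification
  have key_int : ∀ (s₀ : S) (a₀ : A) (g : S → ℝ) (C : ℝ), 0 ≤ C → Measurable g →
      (∀ x, |g x| ≤ C) →
      |∫ s', (p t s₀ a₀ s' - φ t s₀ a₀ ⬝ᵥ ψ t s') * g s' ∂(μ t)| ≤ ε * C := by
    intro s₀ a₀ g C hC hgm hgC
    set Δ : S → ℝ := fun s' => p t s₀ a₀ s' - φ t s₀ a₀ ⬝ᵥ ψ t s' with hΔdef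
    have hΔm : AEStronglyMeasurable Δ (μ t) := by
      have hc : Continuous fun v : Fin d → ℝ => φ t s₀ a₀ ⬝ᵥ v := by
        exact continuous_finset_sum _ fun j _ => continuous_const.mul (continuous_apply j)
      have h1 : AEStronglyMeasurable (fun s' => φ t s₀ a₀ ⬝ᵥ ψ t s') (μ t) :=
        hc.comp_aestronglyMeasurable (hψ_int t).aestronglyMeasurable
      exact ((hp_meas t s₀ a₀).aestronglyMeasurable).sub h1
    have hΔint : Integrable (fun s' => |Δ s'|) (μ t) := hΔP_int t ht1 htH s₀ a₀
    have hint : Integrable (fun s' => Δ s' * g s') (μ t) := by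
      refine Integrable.mono' (hΔint.const_mul C) (hΔm.mul hgm.aestronglyMeasurable) ?_
      filter_upwards with s'
      rw [Real.norm_eq_abs, abs_mul, mul_comm C]
      exact mul_le_mul_of_nonneg_left (hgC s') (abs_nonneg _)
    calc |∫ s', Δ s' * g s' ∂(μ t)| ≤ ∫ s', |Δ s' * g s'| ∂(μ t) := by
          simpa only [Real.norm_eq_abs] using norm_integral_le_integral_norm (fun s' => Δ s' * g s')
      _ ≤ ∫ s', C * |Δ s'| ∂(μ t) := by
          refine integral_mono hint.abs (hΔint.const_mul C) fun s' => ?_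
          rw [abs_mul, mul_comm C]
          exact mul_le_mul_of_nonneg_left (hgC s') (abs_nonneg _)
      _ = C * ∫ s', |Δ s'| ∂(μ t) := integral_const_mul C _
      _ ≤ C * ε := mul_le_mul_of_nonneg_left (hΔP_eps t ht1 htH s₀ a₀) hC
      _ = ε * C := mul_comm _ _
  -- bounds on the value function
  have hVbnd : ∀ n u, 1 ≤ u → u + n = H + 1 → ∀ s₀, 0 ≤ V u s₀ ∧ V u s₀ ≤ (n : ℝ) := by
    intro n
    induction n with
    | zero =>
      intro u hu1' hu s₀
      have : u = H + 1 := by omega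
      subst this
      simp [hV_top]
    | succ n ih =>
      intro u hu1 hu s₀
      have huH : u ≤ H := by omega
      have hib := ih (u + 1) (by omega) (by omega)
      have hPint := hV_int u hu1 huH s₀ (π u s₀)
      haveI := hP_prob u s₀ (π u s₀)
      have h0 : 0 ≤ ∫ s', V (u + 1) s' ∂(P u s₀ (π u s₀)) :=
        integral_nonneg fun s' => (hib s').1
      have h1 : ∫ s', V (u + 1) s' ∂(P u s₀ (π u s₀)) ≤ (n : ℝ) := by
        calc ∫ s', V (u + 1) s' ∂(P u s₀ (π u s₀))
            ≤ ∫ _, (n : ℝ) ∂(P u s₀ (π u s₀)) :=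
              integral_mono hPint (integrable_const _) fun s' => (hib s').2
          _ = (n : ℝ) := by simp
      have hr' := hr01 u s₀ (π u s₀)
      rw [hV u hu1 huH, hQ u hu1 huH]
      constructor
      · linarith [hr'.1]
      · push_cast
        linarith [hr'.2]
  have harg : (t + 1) + (H - t) = H + 1 := by omega
  have hV1 : ∀ s₀, 0 ≤ V (t + 1) s₀ := fun s₀ => (hVbnd (H - t) (t + 1) (by omega) harg s₀).1
  have hV2 : ∀ s₀, |V (t + 1) s₀| ≤ (H : ℝ) - 1 := by
    intro s₀
    have h := hVbnd (H - t) (t + 1) (by omega) harg s₀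
    rw [abs_of_nonneg h.1]
    refine le_trans h.2 ?_
    have h1 : ((H - t : ℕ) : ℝ) ≤ ((H - 1 : ℕ) : ℝ) := by
      exact_mod_cast Nat.sub_le_sub_left ht1 H
    rw [Nat.cast_sub hH] at h1
    simpa using h1
  intro s a
  -- matrix positivity facts
  have hSig_pd : Sig.PosDef := hSig ▸ aux_posDef lam hlam φD
  have hdet : IsUnit Sig.det := (Matrix.isUnit_iff_isUnit_det Sig).mp hSig_pd.isUnit
  have hinv_pd : Sig⁻¹.PosDef := hSig_pd.inv
  have hinv_symm : (Sig⁻¹)ᵀ = Sig⁻¹ := by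
    have h := hinv_pd.isHermitian
    ext i j
    have h2 := congrFun (congrFun h i) j
    simpa [Matrix.conjTranspose_apply] using h2
  set Vφ : ℝ := φ t s a ⬝ᵥ (Sig⁻¹ *ᵥ φ t s a) with hVφdef
  set x : Fin d → ℝ := Sig⁻¹ *ᵥ φ t s a with hxdef
  have hVφ_nonneg : 0 ≤ Vφ := by
    have h := hinv_pd.posSemidef.dotProduct_mulVec_nonneg (φ t s a)
    rw [star_trivial] at h
    exact h
  have hxφ : x ⬝ᵥ φ t s a = Vφ := by
    rw [hVφdef, hxdef, dotProduct_comm]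
  have hvecmul : ∀ v : Fin d → ℝ, v ᵥ* Sig⁻¹ = Sig⁻¹ *ᵥ v := by
    intro v
    conv_lhs => rw [← hinv_symm]
    rw [Matrix.vecMul_transpose]
  set w : Fin (k - 1) → ℝ := fun i => φ t s a ⬝ᵥ (Sig⁻¹ *ᵥ φD i) with hwdef
  have hw : ∀ i, w i = x ⬝ᵥ φD i := by
    intro i
    rw [hwdef]
    simp only
    rw [Matrix.dotProduct_mulVec, hvecmul, hxdef]
  have hSx : Sig *ᵥ x = φ t s a := by
    rw [hxdef, Matrix.mulVec_mulVec, Matrix.mul_nonsing_inv Sig hdet, Matrix.one_mulVec]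
  have hxx : 0 ≤ x ⬝ᵥ x := by
    have : x ⬝ᵥ x = ∑ j, x j * x j := rfl
    rw [this]
    exact Finset.sum_nonneg fun j _ => mul_self_nonneg _
  have hsum_sq : ∑ i, (w i) ^ 2 ≤ Vφ := by
    have e1 : x ⬝ᵥ (Sig *ᵥ x) = Vφ := by rw [hSx, hxφ]
    have e2 : x ⬝ᵥ (Sig *ᵥ x) = lam * (x ⬝ᵥ x) + ∑ i, (w i) ^ 2 := by
      rw [hSig, Matrix.add_mulVec, dotProduct_add, Matrix.smul_mulVec,
        Matrix.one_mulVec, dotProduct_smul, aux_sum_mulVec, aux_dotProduct_sum,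
        smul_eq_mul]
      congr 1
      refine Finset.sum_congr rfl fun i _ => ?_
      rw [aux_vecMulVec_mulVec, dotProduct_smul, smul_eq_mul, ← hw i,
        dotProduct_comm (φD i) x, ← hw i, ← sq]
    nlinarith [mul_nonneg hlam.le hxx]
  have hCS : ∑ i, |w i| ≤ Real.sqrt ((k - 1 : ℕ) : ℝ) * Real.sqrt (∑ i, (w i) ^ 2) := by
    have h := Finset.sum_mul_sq_le_sq_mul_sq Finset.univ (fun _ => (1 : ℝ)) (fun i => |w i|)
    simp only [one_mul, one_pow, sq_abs] at h
    have hcard : (∑ _i : Fin (k - 1), (1 : ℝ)) = ((k - 1 : ℕ) : ℝ) := by simp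
    rw [hcard] at h
    have h0 : 0 ≤ ∑ i, |w i| := Finset.sum_nonneg fun i _ => abs_nonneg _
    calc ∑ i, |w i| = Real.sqrt ((∑ i, |w i|) ^ 2) := (Real.sqrt_sq h0).symm
      _ ≤ Real.sqrt (((k - 1 : ℕ) : ℝ) * ∑ i, (w i) ^ 2) := Real.sqrt_le_sqrt h
      _ = Real.sqrt ((k - 1 : ℕ) : ℝ) * Real.sqrt (∑ i, (w i) ^ 2) :=
          Real.sqrt_mul (by positivity) _
  -- density transfer
  have hofReal : (fun s' => ENNReal.ofReal (p t s a s'))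
      = fun s' => ((p t s a s').toNNReal : ENNReal) := rfl
  have hdens : ∀ g : S → ℝ, ∫ s', g s' ∂(P t s a) = ∫ s', p t s a s' * g s' ∂(μ t) := by
    intro g
    rw [hP_dens t ht1 htH s a, hofReal,
      integral_withDensity_eq_integral_smul ((hp_meas t s a).real_toNNReal) g]
    congr 1
    funext s'
    rw [NNReal.smul_def, Real.coe_toNNReal _ (hp_nonneg t s a s'), smul_eq_mul]
  have hpV_int : Integrable (fun s' => p t s a s' * V (t + 1) s') (μ t) := by
    have h := hV_int t ht1 htH s a
    rw [hP_dens t ht1 htH s a, hofReal,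
      integrable_withDensity_iff_integrable_smul ((hp_meas t s a).real_toNNReal)] at h
    refine h.congr (Filter.Eventually.of_forall fun s' => ?_)
    simp only [NNReal.smul_def, Real.coe_toNNReal _ (hp_nonneg t s a s'), smul_eq_mul]
  -- dot product as a continuous linear map
  set L : (Fin d → ℝ) →L[ℝ] ℝ := ∑ j, φ t s a j • ContinuousLinearMap.proj j with hLdef
  have hL : ∀ v, L v = φ t s a ⬝ᵥ v := by
    intro v
    rw [hLdef]
    simp [ContinuousLinearMap.sum_apply, ContinuousLinearMap.smul_apply,
      ContinuousLinearMap.proj_apply, dotProduct]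
  have hφψ_int : Integrable (fun s' => φ t s a ⬝ᵥ ψ t s') (μ t) := by
    have h := L.integrable_comp (hψ_int t)
    exact h.congr (Filter.Eventually.of_forall fun s' => hL _)
  have hHr : (1 : ℝ) ≤ H := by exact_mod_cast hH
  have hφψV_int : Integrable (fun s' => (φ t s a ⬝ᵥ ψ t s') * V (t + 1) s') (μ t) := by
    have h := Integrable.bdd_mul (c := (H : ℝ) - 1) hφψ_int
      (hV_meas (t + 1)).aestronglyMeasurable
      (Filter.Eventually.of_forall fun s' => by rw [Real.norm_eq_abs]; exact hV2 s')
    exact h.congr (Filter.Eventually.of_forall fun s' => mul_comm _ _)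
  have hθint : φ t s a ⬝ᵥ (∫ s', V (t + 1) s' • ψ t s' ∂(μ t))
      = ∫ s', (φ t s a ⬝ᵥ ψ t s') * V (t + 1) s' ∂(μ t) := by
    rw [← hL, ← ContinuousLinearMap.integral_comp_comm L hθπ_int]
    congr 1
    funext s'
    rw [hL, dotProduct_smul, smul_eq_mul, mul_comm]
  have hT2 : Q t s a - φ t s a ⬝ᵥ θπ
      = (r t s a - φ t s a ⬝ᵥ θr t)
        + ∫ s', (p t s a s' - φ t s a ⬝ᵥ ψ t s') * V (t + 1) s' ∂(μ t) := by
    have hsplit : ∫ s', (p t s a s' - φ t s a ⬝ᵥ ψ t s') * V (t + 1) s' ∂(μ t)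
        = (∫ s', p t s a s' * V (t + 1) s' ∂(μ t))
          - ∫ s', (φ t s a ⬝ᵥ ψ t s') * V (t + 1) s' ∂(μ t) := by
      rw [← integral_sub hpV_int hφψV_int]
      congr 1
      funext s'
      ring
    rw [hQ t ht1 htH s a, hdens (V (t + 1)), hθπ, dotProduct_add, hθint, hsplit]
    ring
  have hT2b : |Q t s a - φ t s a ⬝ᵥ θπ| ≤ ε * H := by
    rw [hT2]
    have h2 := key_int s a (V (t + 1)) ((H : ℝ) - 1) (by linarith) (hV_meas (t + 1)) hV2
    calc |(r t s a - φ t s a ⬝ᵥ θr t)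
          + ∫ s', (p t s a s' - φ t s a ⬝ᵥ ψ t s') * V (t + 1) s' ∂(μ t)|
        ≤ |r t s a - φ t s a ⬝ᵥ θr t|
          + |∫ s', (p t s a s' - φ t s a ⬝ᵥ ψ t s') * V (t + 1) s' ∂(μ t)| := abs_add_le _ _
      _ ≤ ε + ε * ((H : ℝ) - 1) := add_le_add (hr_approx t ht1 htH s a) h2
      _ = ε * H := by ring
  have hT3b : |∫ s', (p t s a s' - φ t s a ⬝ᵥ ψ t s') * (Vb s' - V (t + 1) s') ∂(μ t)|
      ≤ ε * (3 * H) :=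
    key_int s a (fun s' => Vb s' - V (t + 1) s') (3 * H) (by positivity)
      (hVb_meas.sub (hV_meas (t + 1))) hVbV_3H
  -- the regression term
  have hc : ∀ i, |(r t (sD i) (aD i) - φD i ⬝ᵥ θr t) +
      ∫ s', (p t (sD i) (aD i) s' - φD i ⬝ᵥ ψ t s') * Vb s' ∂(μ t)| ≤ 3 * ε * H := by
    intro i
    have h1 : |r t (sD i) (aD i) - φD i ⬝ᵥ θr t| ≤ ε := by
      rw [hφD i]; exact hr_approx t ht1 htH _ _
    have h2 : |∫ s', (p t (sD i) (aD i) s' - φD i ⬝ᵥ ψ t s') * Vb s' ∂(μ t)| ≤ ε * (2 * H) := by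
      rw [hφD i]
      exact key_int (sD i) (aD i) Vb (2 * H) (by positivity) hVb_meas hVb_2H
    calc |(r t (sD i) (aD i) - φD i ⬝ᵥ θr t) +
          ∫ s', (p t (sD i) (aD i) s' - φD i ⬝ᵥ ψ t s') * Vb s' ∂(μ t)|
        ≤ |r t (sD i) (aD i) - φD i ⬝ᵥ θr t|
          + |∫ s', (p t (sD i) (aD i) s' - φD i ⬝ᵥ ψ t s') * Vb s' ∂(μ t)| := abs_add_le _ _
      _ ≤ ε + ε * (2 * H) := add_le_add h1 h2
      _ ≤ 3 * ε * H := by nlinarith [mul_nonneg hε (sub_nonneg.mpr hHr)]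
  have hT1 : φ t s a ⬝ᵥ (Sig⁻¹ *ᵥ ∑ i, ((r t (sD i) (aD i) - φD i ⬝ᵥ θr t) +
      ∫ s', (p t (sD i) (aD i) s' - φD i ⬝ᵥ ψ t s') * Vb s' ∂(μ t)) • φD i)
      = ∑ i, ((r t (sD i) (aD i) - φD i ⬝ᵥ θr t) +
      ∫ s', (p t (sD i) (aD i) s' - φD i ⬝ᵥ ψ t s') * Vb s' ∂(μ t)) * w i := by
    have h1 : Sig⁻¹ *ᵥ ∑ i, ((r t (sD i) (aD i) - φD i ⬝ᵥ θr t) +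
      ∫ s', (p t (sD i) (aD i) s' - φD i ⬝ᵥ ψ t s') * Vb s' ∂(μ t)) • φD i
        = ∑ i, ((r t (sD i) (aD i) - φD i ⬝ᵥ θr t) +
      ∫ s', (p t (sD i) (aD i) s' - φD i ⬝ᵥ ψ t s') * Vb s' ∂(μ t)) • (Sig⁻¹ *ᵥ φD i) := by
      rw [← Matrix.mulVecLin_apply, map_sum]
      refine Finset.sum_congr rfl fun i _ => ?_
      rw [_root_.map_smul, Matrix.mulVecLin_apply]
    rw [h1, aux_dotProduct_sum]
    refine Finset.sum_congr rfl fun i _ => ?_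
    rw [dotProduct_smul, smul_eq_mul, hwdef]
  have h3εH : (0 : ℝ) ≤ 3 * ε * H := by positivity
  have hT1b : |φ t s a ⬝ᵥ (Sig⁻¹ *ᵥ ∑ i, ((r t (sD i) (aD i) - φD i ⬝ᵥ θr t) +
      ∫ s', (p t (sD i) (aD i) s' - φD i ⬝ᵥ ψ t s') * Vb s' ∂(μ t)) • φD i)|
      ≤ 3 * ε * H * (Real.sqrt ((d : ℝ) * k) * Real.sqrt Vφ) := by
    rw [hT1]
    calc |∑ i, ((r t (sD i) (aD i) - φD i ⬝ᵥ θr t) +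
      ∫ s', (p t (sD i) (aD i) s' - φD i ⬝ᵥ ψ t s') * Vb s' ∂(μ t)) * w i|
        ≤ ∑ i, |((r t (sD i) (aD i) - φD i ⬝ᵥ θr t) +
      ∫ s', (p t (sD i) (aD i) s' - φD i ⬝ᵥ ψ t s') * Vb s' ∂(μ t)) * w i| := Finset.abs_sum_le_sum_abs _ _
      _ ≤ ∑ i, 3 * ε * H * |w i| := Finset.sum_le_sum fun i _ => by
          rw [abs_mul]; exact mul_le_mul_of_nonneg_right (hc i) (abs_nonneg _)
      _ = 3 * ε * H * ∑ i, |w i| := by rw [← Finset.mul_sum]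
      _ ≤ 3 * ε * H * (Real.sqrt ((k - 1 : ℕ) : ℝ) * Real.sqrt (∑ i, (w i) ^ 2)) :=
          mul_le_mul_of_nonneg_left hCS h3εH
      _ ≤ 3 * ε * H * (Real.sqrt ((k - 1 : ℕ) : ℝ) * Real.sqrt Vφ) :=
          mul_le_mul_of_nonneg_left
            (mul_le_mul_of_nonneg_left (Real.sqrt_le_sqrt hsum_sq) (Real.sqrt_nonneg _)) h3εH
      _ ≤ 3 * ε * H * (Real.sqrt ((d : ℝ) * k) * Real.sqrt Vφ) := by
          refine mul_le_mul_of_nonneg_left ?_ h3εH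
          rcases Nat.eq_zero_or_pos d with hd | hd
          · have hde : IsEmpty (Fin d) := by rw [hd]; infer_instance
            have hVφ0 : Vφ = 0 := by
              rw [hVφdef]
              simp [dotProduct, Finset.univ_eq_empty]
            rw [hVφ0, Real.sqrt_zero, mul_zero, mul_zero]
          · refine mul_le_mul_of_nonneg_right (Real.sqrt_le_sqrt ?_) (Real.sqrt_nonneg _)
            have hkd : (k - 1 : ℕ) ≤ d * k := le_trans (Nat.sub_le k 1) (Nat.le_mul_of_pos_left k hd)
            exact_mod_cast hkd
  -- combine
  have hsplit3 : |m s a| ≤ |φ t s a ⬝ᵥ (Sig⁻¹ *ᵥ ∑ i, ((r t (sD i) (aD i) - φD i ⬝ᵥ θr t) +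
      ∫ s', (p t (sD i) (aD i) s' - φD i ⬝ᵥ ψ t s') * Vb s' ∂(μ t)) • φD i)|
      + |Q t s a - φ t s a ⬝ᵥ θπ|
      + |∫ s', (p t s a s' - φ t s a ⬝ᵥ ψ t s') * (Vb s' - V (t + 1) s') ∂(μ t)| := by
    rw [hm s a]
    calc |φ t s a ⬝ᵥ (Sig⁻¹ *ᵥ ∑ i,
        ((r t (sD i) (aD i) - φD i ⬝ᵥ θr t) +
          ∫ s', (p t (sD i) (aD i) s' - φD i ⬝ᵥ ψ t s') * Vb s' ∂(μ t)) • φD i)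
      + (Q t s a - φ t s a ⬝ᵥ θπ)
      - ∫ s', (p t s a s' - φ t s a ⬝ᵥ ψ t s') * (Vb s' - V (t + 1) s') ∂(μ t)|
        ≤ |φ t s a ⬝ᵥ (Sig⁻¹ *ᵥ ∑ i,
        ((r t (sD i) (aD i) - φD i ⬝ᵥ θr t) +
          ∫ s', (p t (sD i) (aD i) s' - φD i ⬝ᵥ ψ t s') * Vb s' ∂(μ t)) • φD i)
      + (Q t s a - φ t s a ⬝ᵥ θπ)|
      + |∫ s', (p t s a s' - φ t s a ⬝ᵥ ψ t s') * (Vb s' - V (t + 1) s') ∂(μ t)| := abs_sub _ _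
      _ ≤ _ := by
          gcongr
          exact abs_add_le _ _
  have hX : 0 ≤ Real.sqrt ((d : ℝ) * k) * Real.sqrt Vφ := by positivity
  have hfin : 0 ≤ ε * H * (Real.sqrt ((d : ℝ) * k) * Real.sqrt Vφ) := by positivity
  calc |m s a| ≤ 3 * ε * H * (Real.sqrt ((d : ℝ) * k) * Real.sqrt Vφ) + ε * H + ε * (3 * H) := by
        linarith [hsplit3, hT1b, hT2b, hT3b]
    _ ≤ 4 * ε * H * (Real.sqrt ((d : ℝ) * k) * Real.sqrt Vφ + 1) := by nlinarith [hfin]
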